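/- (Real zeros of star products add multiplicities) Let f, g be slice regular on B_R ⊂ ℍ and α ∈ B_R ∩ ℝ. If (w − α)^s divides f with f = (w−α)^s h₁, h₁(α) ≠ 0, and (w − α)^t divides g with g = (w−α)^t h₂, h₂(α) ≠ 0, then f*g = (w−α)^{s+t}(h₁ * h₂) with (h₁ * h₂)(α) ≠ 0. -/

import Mathlib

noncomputable section

/-- The real quaternions. -/
abbrev Quat := Quaternion ℝ

/-- Evaluation of a quaternionic power series with right coefficients `a` at `q`:
`f(q) = Σᵢ qⁱ aᵢ` (the sum is `0` by convention if the series does not converge). -/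
def pev (a : ℕ → Quat) (q : Quat) : Quat := ∑' i, q ^ i * a i

/-- The power series with coefficients `a` converges on the open ball of radius `R`. -/
def ConvOn (a : ℕ → Quat) (R : ℝ) : Prop :=
  ∀ q : Quat, ‖q‖ < R → Summable fun i => q ^ i * a i

/-- Coefficients of the star product `f * g` (convolution of coefficients). -/
def scoef (a b : ℕ → Quat) : ℕ → Quat :=
  fun k => ∑ p ∈ Finset.HasAntidiagonal.antidiagonal k, a p.1 * b p.2

/-- Coefficients of the conjugate series `conj f`. -/
def cconj (a : ℕ → Quat) : ℕ → Quat := fun i => star (a i)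

/-- Coefficients of the normal (symmetrized) series `N(f) = f * conj f`. -/
def Ncoef (a : ℕ → Quat) : ℕ → Quat := scoef a (cconj a)

/-- The conjugacy class of `α`: quaternions with the same trace and the same norm. -/
def Sset (α : Quat) : Set Quat := {x | x + star x = α + star α ∧ ‖x‖ = ‖α‖}

/-- The characteristic polynomial of `α`, evaluated at `q`:
`Δ_α(q) = q² - q·tr(α) + |α|²`. -/
def Δev (α q : Quat) : Quat := q ^ 2 - q * (α + star α) + algebraMap ℝ Quat (‖α‖ ^ 2)

/-- Coefficients of the linear polynomial `w - α`. -/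
def lin (α : Quat) : ℕ → Quat := fun k => if k = 0 then -α else if k = 1 then 1 else 0

/-- Zero set of the series `a` in the ball of radius `R`. -/
def Vset (a : ℕ → Quat) (R : ℝ) : Set Quat := {q | ‖q‖ < R ∧ pev a q = 0}

namespace Stmt16Aux

open Finset

lemma abs_conv {a : ℕ → Quat} {R : ℝ} (h : ConvOn a R) {q : Quat} (hq : ‖q‖ < R) :
    Summable fun i => ‖q ^ i * a i‖ := by
  obtain ⟨r, hr1, hr2⟩ := exists_between hq
  have hrpos : 0 < r := lt_of_le_of_lt (norm_nonneg q) hr1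
  have hsum := h (algebraMap ℝ Quat r)
    (by rwa [norm_algebraMap', Real.norm_eq_abs, abs_of_pos hrpos])
  have hbdd : BddAbove (Set.range fun i => ‖(algebraMap ℝ Quat r) ^ i * a i‖) :=
    (hsum.tendsto_atTop_zero.norm.bddAbove_range)
  obtain ⟨C, hC⟩ := hbdd
  have hCle : ∀ i, r ^ i * ‖a i‖ ≤ C := by
    intro i
    have := hC (Set.mem_range_self i)
    rwa [norm_mul, norm_pow, norm_algebraMap', Real.norm_eq_abs, abs_of_pos hrpos] at this
  have hgeo : Summable fun i => C * (‖q‖ / r) ^ i :=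
    (summable_geometric_of_lt_one (by positivity)
      (by rw [div_lt_one hrpos]; exact hr1)).mul_left C
  refine hgeo.of_nonneg_of_le (fun i => norm_nonneg _) fun i => ?_
  have h1 : ‖q ^ i * a i‖ = (‖q‖ / r) ^ i * (r ^ i * ‖a i‖) := by
    rw [norm_mul, norm_pow, div_pow, ← mul_assoc, div_mul_cancel₀]
    positivity
  rw [h1, mul_comm C]
  exact mul_le_mul_of_nonneg_left (hCle i) (by positivity)

lemma summable_norm_scoef {a b : ℕ → Quat} {q : Quat}
    (ha : Summable fun i => ‖q ^ i * a i‖) (hb : Summable fun i => ‖q ^ i * b i‖) :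
    Summable fun k => ‖q ^ k * scoef a b k‖ := by
  have h := summable_sum_mul_antidiagonal_of_summable_mul
    (Summable.mul_of_nonneg ha hb (fun _ => norm_nonneg _) fun _ => norm_nonneg _)
  refine h.of_nonneg_of_le (fun _ => norm_nonneg _) fun k => ?_
  calc ‖q ^ k * scoef a b k‖ ≤ ∑ p ∈ antidiagonal k, ‖q ^ k * (a p.1 * b p.2)‖ := by
        rw [scoef, mul_sum]; exact norm_sum_le _ _
    _ = ∑ p ∈ antidiagonal k, ‖q ^ p.1 * a p.1‖ * ‖q ^ p.2 * b p.2‖ := by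
        refine sum_congr rfl fun p hp => ?_
        have hk : p.1 + p.2 = k := mem_antidiagonal.mp hp
        simp only [← hk, norm_mul, norm_pow, pow_add]
        ring

lemma pev_scoef {a b : ℕ → Quat} {q : Quat}
    (ha : Summable fun i => ‖q ^ i * a i‖) (hb : Summable fun i => ‖q ^ i * b i‖)
    (hc : ∀ i j : ℕ, Commute (a i) (q ^ j)) :
    pev (scoef a b) q = pev a q * pev b q := by
  rw [pev, pev, pev, tsum_mul_tsum_eq_tsum_sum_antidiagonal_of_summable_norm ha hb]
  refine tsum_congr fun k => ?_
  rw [scoef, mul_sum]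
  refine (sum_congr rfl fun p hp => ?_).symm
  have hk : p.1 + p.2 = k := mem_antidiagonal.mp hp
  rw [← hk, pow_add, mul_assoc, ← mul_assoc (a p.1), (hc p.1 p.2).eq,
    mul_assoc, mul_assoc]

/-- Coefficients of `(w - α)^s` for real `α`. -/
def rs (α : ℝ) (s : ℕ) : ℕ → Quat :=
  fun k => if k ≤ s then ((s.choose k : Quat)) * (-(algebraMap ℝ Quat α)) ^ (s - k) else 0

lemma rs_commute (α : ℝ) (s : ℕ) (i : ℕ) (x : Quat) : Commute (rs α s i) x := by
  unfold rs
  split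
  · exact Commute.mul_left (Nat.cast_commute _ _)
      ((Algebra.commute_algebraMap_left α x).neg_left.pow_left _)
  · exact Commute.zero_left x

lemma rs_summable_norm (α : ℝ) (s : ℕ) (q : Quat) :
    Summable fun i => ‖q ^ i * rs α s i‖ := by
  apply summable_of_ne_finset_zero (s := range (s + 1))
  intro i hi
  have : ¬ i ≤ s := by simpa [Nat.lt_succ_iff] using hi
  simp [rs, this]

lemma pev_rs (α : ℝ) (s : ℕ) (q : Quat) :
    pev (rs α s) q = (q - algebraMap ℝ Quat α) ^ s := by
  have hcomm : Commute q (-(algebraMap ℝ Quat α)) :=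
    (Algebra.commute_algebraMap_right α q).neg_right
  rw [pev, tsum_eq_sum (s := range (s + 1)) (by
    intro i hi
    have : ¬ i ≤ s := by simpa [Nat.lt_succ_iff] using hi
    simp [rs, this])]
  rw [sub_eq_add_neg, hcomm.add_pow]
  refine sum_congr rfl fun k hk => ?_
  have hk' : k ≤ s := Nat.lt_succ_iff.mp (mem_range.mp hk)
  rw [rs]
  simp only [if_pos hk']
  rw [(Nat.cast_commute (s.choose k) ((-(algebraMap ℝ Quat α)) ^ (s - k))).eq, ← mul_assoc]

/-- power series bridge -/
lemma mk_scoef (a b : ℕ → Quat) :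
    PowerSeries.mk (scoef a b) = PowerSeries.mk a * PowerSeries.mk b := by
  apply PowerSeries.ext
  intro k
  rw [PowerSeries.coeff_mk, PowerSeries.coeff_mul]
  simp [scoef]

lemma mk_inj {a b : ℕ → Quat} (h : PowerSeries.mk a = PowerSeries.mk b) : a = b := by
  funext k
  have := congrArg (PowerSeries.coeff (R := Quat) k) h
  simpa using this

lemma scoef_comm_central {a r : ℕ → Quat} (hr : ∀ i x, Commute (r i) x) :
    scoef a r = scoef r a := by
  funext k
  rw [scoef, scoef, ← Finset.Nat.sum_antidiagonal_swap]
  exact sum_congr rfl fun p _ => ((hr p.1 (a p.2)).eq).symm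

/-- Formal multilinear series over ℝ attached to coefficients `a`. -/
def pser (a : ℕ → Quat) : FormalMultilinearSeries ℝ ℝ Quat :=
  fun n => ContinuousMultilinearMap.mkPiRing ℝ (Fin n) (a n)

lemma hasFP {a : ℕ → Quat} {R : ℝ} (ha : ConvOn a R) (hR : 0 < R) :
    HasFPowerSeriesAt (fun x : ℝ => pev a (algebraMap ℝ Quat x)) (pser a) 0 := by
  have h2 : 0 < R / 2 := by linarith
  have h2R : R / 2 < R := by linarith
  refine ⟨ENNReal.ofReal (R / 2), ?_, ?_, ?_⟩
  · rw [ENNReal.ofReal]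
    apply FormalMultilinearSeries.le_radius_of_summable_norm
    have hs := abs_conv ha (q := algebraMap ℝ Quat (R / 2))
      (by rw [norm_algebraMap', Real.norm_eq_abs, abs_of_pos h2]; exact h2R)
    refine hs.congr fun n => ?_
    rw [norm_mul, norm_pow, norm_algebraMap', Real.norm_eq_abs, abs_of_pos h2]
    rw [pser, ContinuousMultilinearMap.norm_mkPiRing, Real.coe_toNNReal _ (le_of_lt h2)]
    ring
  · simpa using h2
  · intro y hy
    have hy' : ‖algebraMap ℝ Quat y‖ < R := by
      rw [norm_algebraMap', Real.norm_eq_abs]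
      rw [EMetric.mem_ball, edist_zero_right, ← ofReal_norm,
        ENNReal.ofReal_lt_ofReal_iff h2, Real.norm_eq_abs] at hy
      linarith
    have hsum := (ha _ hy').hasSum
    have : ∀ n, (pser a n fun _ => y) = (algebraMap ℝ Quat y) ^ n * a n := by
      intro n
      rw [pser, ContinuousMultilinearMap.mkPiRing_apply]
      rw [Finset.prod_const, Finset.card_univ, Fintype.card_fin]
      rw [Algebra.smul_def, map_pow]
    rw [show ((0 : ℝ) + y) = y by ring]
    exact HasSum.congr_fun hsum fun n => (this n)

lemma coeff_unique {a b : ℕ → Quat} {R : ℝ} (hR : 0 < R)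
    (ha : ConvOn a R) (hb : ConvOn b R)
    (h : ∀ x : ℝ, |x| < R → pev a (algebraMap ℝ Quat x) = pev b (algebraMap ℝ Quat x)) :
    a = b := by
  have hev : ∀ᶠ x in nhds (0 : ℝ),
      pev a (algebraMap ℝ Quat x) = pev b (algebraMap ℝ Quat x) := by
    filter_upwards [eventually_abs_sub_lt (0 : ℝ) hR] with x hx
    exact h x (by simpa using hx)
  have hps : pser a = pser b :=
    (hasFP ha hR).eq_formalMultilinearSeries_of_eventually (hasFP hb hR) hev
  funext n
  have h1 := congrFun hps n
  have h2 := congrArg (fun m : ContinuousMultilinearMap ℝ (fun _ : Fin n => ℝ) Quat =>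
    m fun _ => (1 : ℝ)) h1
  simpa [pser, ContinuousMultilinearMap.mkPiRing_apply] using h2

end Stmt16Aux

open Stmt16Aux in
/-- Real zeros of star products add multiplicities: if `f = (w-α)^s h₁` and
`g = (w-α)^t h₂` with `α` real, `h₁(α) ≠ 0`, `h₂(α) ≠ 0`, then
`f*g = (w-α)^(s+t) (h₁*h₂)` with `(h₁*h₂)(α) ≠ 0`. -/
theorem stmt16 (f g h₁ h₂ : ℕ → Quat) (R : ℝ) (hR : 0 < R) (s t : ℕ)
    (hf : ConvOn f R) (hg : ConvOn g R) (hh₁ : ConvOn h₁ R) (hh₂ : ConvOn h₂ R)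
    (α : ℝ) (hα : |α| < R)
    (hdf : ∀ q : Quat, ‖q‖ < R →
      pev f q = (q - algebraMap ℝ Quat α) ^ s * pev h₁ q)
    (hdg : ∀ q : Quat, ‖q‖ < R →
      pev g q = (q - algebraMap ℝ Quat α) ^ t * pev h₂ q)
    (h1 : pev h₁ (algebraMap ℝ Quat α) ≠ 0) (h2 : pev h₂ (algebraMap ℝ Quat α) ≠ 0) :
    (∀ q : Quat, ‖q‖ < R →
      pev (scoef f g) q = (q - algebraMap ℝ Quat α) ^ (s + t) * pev (scoef h₁ h₂) q) ∧
    pev (scoef h₁ h₂) (algebraMap ℝ Quat α) ≠ 0 := by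
  have hAn : ‖algebraMap ℝ Quat α‖ < R := by
    rw [norm_algebraMap', Real.norm_eq_abs]; exact hα
  have hconv1 : ConvOn (scoef (rs α s) h₁) R := fun q hq =>
    (summable_norm_scoef (rs_summable_norm α s q) (abs_conv hh₁ hq)).of_norm
  have hconv2 : ConvOn (scoef (rs α t) h₂) R := fun q hq =>
    (summable_norm_scoef (rs_summable_norm α t q) (abs_conv hh₂ hq)).of_norm
  have hfe : f = scoef (rs α s) h₁ := by
    refine coeff_unique hR hf hconv1 fun x hx => ?_
    have hq : ‖algebraMap ℝ Quat x‖ < R := by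
      rw [norm_algebraMap', Real.norm_eq_abs]; exact hx
    rw [hdf _ hq, pev_scoef (rs_summable_norm α s _) (abs_conv hh₁ hq)
      (fun i j => rs_commute α s i _), pev_rs]
  have hge : g = scoef (rs α t) h₂ := by
    refine coeff_unique hR hg hconv2 fun x hx => ?_
    have hq : ‖algebraMap ℝ Quat x‖ < R := by
      rw [norm_algebraMap', Real.norm_eq_abs]; exact hx
    rw [hdg _ hq, pev_scoef (rs_summable_norm α t _) (abs_conv hh₂ hq)
      (fun i j => rs_commute α t i _), pev_rs]
  have hcomm12 : scoef h₁ (rs α t) = scoef (rs α t) h₁ :=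
    scoef_comm_central (rs_commute α t)
  have hkey : scoef f g = scoef (scoef (rs α s) (rs α t)) (scoef h₁ h₂) := by
    apply mk_inj
    simp only [hfe, hge, mk_scoef]
    have hc : PowerSeries.mk h₁ * PowerSeries.mk (rs α t)
        = PowerSeries.mk (rs α t) * PowerSeries.mk h₁ := by
      rw [← mk_scoef, hcomm12, mk_scoef]
    rw [mul_assoc, ← mul_assoc (PowerSeries.mk h₁), hc, mul_assoc, ← mul_assoc, ← mul_assoc]
  constructor
  · intro q hq
    have hn1 := abs_conv hh₁ hq
    have hn2 := abs_conv hh₂ hq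
    have hn12 := summable_norm_scoef hn1 hn2
    have hnrS := rs_summable_norm α s q
    have hnrT := rs_summable_norm α t q
    have hnrr := summable_norm_scoef hnrS hnrT
    have hrrcomm : ∀ i j, Commute (scoef (rs α s) (rs α t) i) (q ^ j) := by
      intro i j
      exact Commute.sum_left _ _ _ fun p hp =>
        Commute.mul_left (rs_commute α s p.1 _) (rs_commute α t p.2 _)
    rw [hkey, pev_scoef hnrr hn12 hrrcomm,
      pev_scoef hnrS hnrT (fun i j => rs_commute α s i _), pev_rs, pev_rs, ← pow_add]
  · rw [pev_scoef (abs_conv hh₁ hAn) (abs_conv hh₂ hAn)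
      (fun i j => (Algebra.commute_algebraMap_right α (h₁ i)).pow_right j)]
    exact mul_ne_zero h1 h2
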